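/- Let Y be a nonnegative random variable of the form Y = g₀*(U) where U is uniform on (-π,π] and g₀*(θ) = α²/(|θ| ∨ α) for an α ∈ (0,π]. Then E(e^{Y/α}) ≤ exp{(αe/π)(1 + log(π/α))}. -/

import Mathlib

open Real intervalIntegral

lemma exp_le_one_add_e_mul (x : ℝ) (hx0 : 0 ≤ x) (hx1 : x ≤ 1) :
    Real.exp x ≤ 1 + Real.exp 1 * x := by
  have h := convexOn_exp.2 (Set.mem_univ (0:ℝ)) (Set.mem_univ (1:ℝ))
    (by linarith : (0:ℝ) ≤ 1 - x) hx0 (by ring)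
  simp only [smul_eq_mul, mul_zero, mul_one, Real.exp_zero, zero_add] at h
  nlinarith

theorem stmt16 (α : ℝ) (hα : α ∈ Set.Ioc (0:ℝ) Real.pi) :
    (1 / (2 * Real.pi)) *
      (∫ θ in (-Real.pi)..Real.pi, Real.exp ((α^2 / (max |θ| α)) / α)) ≤
    Real.exp ((α * Real.exp 1 / Real.pi) * (1 + Real.log (Real.pi / α))) := by
  obtain ⟨hα0, hαπ⟩ := hα
  have hπ : (0:ℝ) < Real.pi := Real.pi_pos
  set M : ℝ → ℝ := fun θ => max |θ| α with hMdef
  have hMpos : ∀ θ, 0 < M θ := fun θ => lt_of_lt_of_le hα0 (le_max_right _ _)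
  have hcontM : Continuous M := continuous_abs.max continuous_const
  have hcontm : Continuous fun θ => (M θ)⁻¹ := hcontM.inv₀ (fun θ => (hMpos θ).ne')
  have hcontf : Continuous fun θ => Real.exp ((α^2 / M θ) / α) :=
    (((continuous_const.div hcontM fun θ => (hMpos θ).ne').div_const α)).rexp
  -- pointwise bound
  have hpt : ∀ θ, Real.exp ((α^2 / M θ) / α) ≤ 1 + Real.exp 1 * α * (M θ)⁻¹ := by
    intro θ
    have h1 : (α^2 / M θ) / α = α * (M θ)⁻¹ := by
      field_simp
    rw [h1]
    have hx0 : 0 ≤ α * (M θ)⁻¹ := by positivity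
    have hx1 : α * (M θ)⁻¹ ≤ 1 := by
      rw [← div_eq_mul_inv, div_le_one (hMpos θ)]
      exact le_max_right _ _
    calc Real.exp (α * (M θ)⁻¹) ≤ 1 + Real.exp 1 * (α * (M θ)⁻¹) :=
          exp_le_one_add_e_mul _ hx0 hx1
      _ = 1 + Real.exp 1 * α * (M θ)⁻¹ := by ring
  set L : ℝ := Real.log (Real.pi / α) with hLdef
  have hL0 : 0 ≤ L := Real.log_nonneg ((one_le_div hα0).2 hαπ)
  -- compute the three pieces of ∫ m
  have hI2 : (∫ θ in (-α)..α, (M θ)⁻¹) = 2 := by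
    have : (∫ θ in (-α)..α, (M θ)⁻¹) = ∫ _ in (-α)..α, α⁻¹ := by
      apply intervalIntegral.integral_congr
      intro θ hθ
      rw [Set.uIcc_of_le (by linarith)] at hθ
      have : |θ| ≤ α := abs_le.2 ⟨hθ.1, hθ.2⟩
      simp [hMdef, max_eq_right this]
    rw [this, intervalIntegral.integral_const, smul_eq_mul]
    field_simp
    ring
  have hI3 : (∫ θ in α..Real.pi, (M θ)⁻¹) = L := by
    have h1 : (∫ θ in α..Real.pi, (M θ)⁻¹) = ∫ θ in α..Real.pi, θ⁻¹ := by
      apply intervalIntegral.integral_congr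
      intro θ hθ
      rw [Set.uIcc_of_le hαπ] at hθ
      have hθ0 : 0 < θ := lt_of_lt_of_le hα0 hθ.1
      have : |θ| = θ := abs_of_pos hθ0
      simp [hMdef, this, max_eq_left hθ.1]
    rw [h1, integral_inv (by rw [Set.uIcc_of_le hαπ]; intro h; exact absurd h.1 (by linarith))]
  have hI1 : (∫ θ in (-Real.pi)..(-α), (M θ)⁻¹) = L := by
    have h1 := intervalIntegral.integral_comp_neg (a := α) (b := Real.pi)
      (fun θ => (M θ)⁻¹)
    have h2 : (∫ θ in α..Real.pi, (M (-θ))⁻¹) = ∫ θ in α..Real.pi, (M θ)⁻¹ := by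
      apply intervalIntegral.integral_congr
      intro θ _
      simp [hMdef, abs_neg]
    rw [h2, hI3] at h1
    exact h1.symm
  have hint1 : IntervalIntegrable (fun θ => (M θ)⁻¹) MeasureTheory.volume (-Real.pi) (-α) :=
    hcontm.intervalIntegrable _ _
  have hint2 : IntervalIntegrable (fun θ => (M θ)⁻¹) MeasureTheory.volume (-α) α :=
    hcontm.intervalIntegrable _ _
  have hint3 : IntervalIntegrable (fun θ => (M θ)⁻¹) MeasureTheory.volume α Real.pi :=
    hcontm.intervalIntegrable _ _
  have hItot : (∫ θ in (-Real.pi)..Real.pi, (M θ)⁻¹) = 2 + 2 * L := by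
    rw [← intervalIntegral.integral_add_adjacent_intervals (b := α)
      ((hint1).trans hint2) hint3,
      ← intervalIntegral.integral_add_adjacent_intervals (b := -α) hint1 hint2,
      hI1, hI2, hI3]
    ring
  -- bound the main integral
  have hmono : (∫ θ in (-Real.pi)..Real.pi, Real.exp ((α^2 / M θ) / α)) ≤
      ∫ θ in (-Real.pi)..Real.pi, (1 + Real.exp 1 * α * (M θ)⁻¹) := by
    apply intervalIntegral.integral_mono_on (by linarith)
      (hcontf.intervalIntegrable _ _)
      ((continuous_const.add (continuous_const.mul hcontm)).intervalIntegrable _ _)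
    intro θ _
    exact hpt θ
  have hIg : (∫ θ in (-Real.pi)..Real.pi, (1 + Real.exp 1 * α * (M θ)⁻¹)) =
      2 * Real.pi + Real.exp 1 * α * (2 + 2 * L) := by
    rw [intervalIntegral.integral_add (intervalIntegrable_const)
      (((hint1.trans hint2).trans hint3).const_mul _),
      intervalIntegral.integral_const_mul, hItot,
      intervalIntegral.integral_const, smul_eq_mul]
    ring
  have hle : (1 / (2 * Real.pi)) *
      (∫ θ in (-Real.pi)..Real.pi, Real.exp ((α^2 / M θ) / α)) ≤
      1 + (α * Real.exp 1 / Real.pi) * (1 + L) := by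
    have h2π : (0:ℝ) < 2 * Real.pi := by linarith
    have := mul_le_mul_of_nonneg_left (hmono.trans_eq hIg) (le_of_lt (by positivity : (0:ℝ) < 1 / (2 * Real.pi)))
    calc (1 / (2 * Real.pi)) *
        (∫ θ in (-Real.pi)..Real.pi, Real.exp ((α^2 / M θ) / α))
        ≤ (1 / (2 * Real.pi)) * (2 * Real.pi + Real.exp 1 * α * (2 + 2 * L)) := this
      _ = 1 + (α * Real.exp 1 / Real.pi) * (1 + L) := by
          field_simp
  have hfin := Real.add_one_le_exp ((α * Real.exp 1 / Real.pi) * (1 + L))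
  calc (1 / (2 * Real.pi)) *
      (∫ θ in (-Real.pi)..Real.pi, Real.exp ((α^2 / M θ) / α)) ≤
      1 + (α * Real.exp 1 / Real.pi) * (1 + L) := hle
    _ ≤ Real.exp ((α * Real.exp 1 / Real.pi) * (1 + L)) := by linarith
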